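/- arXiv:1410.0806 — 2 statements merged into one kernel-verified Lean document; each statement's English description precedes it below -/
import Mathlib

section
/- Let H be a Hilbert space, let v_1, ..., v_N be elements of H, and let 1 ≤ M ≤ N be integers. Then ‖∑_{n=1}^N v_n‖² ≤ 2(N/M) ∑_{n=1}^N ‖v_n‖² + 4(N/M) ∑_{m=1}^M |∑_{n=1}^{N-m} ⟨v_{n+m}, v_n⟩|. -/
open Finset

local notation "⟪" x ", " y "⟫" => @inner ℂ _ _ x y

section vdCaux
variable {H : Type*} [NormedAddCommGroup H] [InnerProductSpace ℂ H]

private def vdCu (v : ℕ → H) (N M : ℕ) : ℕ → H :=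
  fun k => if k ∈ Icc (M+1) (M+N) then v (k - M) else 0

private lemma vdCu_zero (v : ℕ → H) (N M : ℕ) {k : ℕ} (hk : k ∉ Icc (M+1) (M+N)) :
    vdCu v N M k = 0 := if_neg hk

private lemma vdCu_sum (v : ℕ → H) (N M : ℕ) :
    ∑ k ∈ Icc (M+1) (M+N), vdCu v N M k = ∑ n ∈ Icc 1 N, v n := by
  rw [show Icc (M+1) (M+N) = (Icc 1 N).map (addLeftEmbedding M) by
    rw [Finset.map_add_left_Icc], Finset.sum_map]
  refine Finset.sum_congr rfl fun n hn => ?_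
  simp only [mem_Icc] at hn
  simp only [addLeftEmbedding_apply, vdCu, mem_Icc]
  rw [if_pos (by omega)]
  congr 1
  omega

private lemma vdCu_shift (v : ℕ → H) (N M : ℕ) {m : ℕ} (hm : m < M) :
    ∑ n ∈ Icc 2 (M+N), vdCu v N M (n + m) = ∑ k ∈ Icc (M+1) (M+N), vdCu v N M k := by
  rw [show (∑ n ∈ Icc 2 (M+N), vdCu v N M (n + m))
      = ∑ k ∈ (Icc 2 (M+N)).map (addRightEmbedding m), vdCu v N M k by
    rw [Finset.sum_map]; rfl]
  rw [Finset.map_add_right_Icc]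
  refine (Finset.sum_subset (Finset.Icc_subset_Icc (by omega) (by omega)) ?_).symm
  intro k _ hk
  exact vdCu_zero v N M hk

private lemma vdCu_B (v : ℕ → H) (N M : ℕ) (hMN : M ≤ N) {m m' : ℕ}
    (hm' : m' ≤ m) (hm : m < M) :
    ∑ n ∈ Icc 2 (M+N), ⟪vdCu v N M (n + m), vdCu v N M (n + m')⟫
      = ∑ n ∈ Icc 1 (N - (m - m')), ⟪v (n + (m - m')), v n⟫ := by
  obtain ⟨h, rfl⟩ : ∃ h, m = m' + h := ⟨m - m', by omega⟩
  rw [show m' + h - m' = h from by omega]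
  have hhN : h ≤ N := by omega
  calc ∑ n ∈ Icc 2 (M+N), ⟪vdCu v N M (n + (m' + h)), vdCu v N M (n + m')⟫
      = ∑ n ∈ Icc 2 (M+N), ⟪vdCu v N M ((n + m') + h), vdCu v N M (n + m')⟫ := by
        refine Finset.sum_congr rfl fun n _ => ?_
        rw [show n + (m' + h) = (n + m') + h from by omega]
    _ = ∑ k ∈ Icc (2+m') (M+N+m'), ⟪vdCu v N M (k + h), vdCu v N M k⟫ := by
        rw [← Finset.map_add_right_Icc, Finset.sum_map]; rfl
    _ = ∑ k ∈ Icc (M+1) (M+N-h), ⟪vdCu v N M (k + h), vdCu v N M k⟫ := by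
        refine (Finset.sum_subset (Finset.Icc_subset_Icc (by omega) (by omega)) ?_).symm
        intro k hk hk'
        simp only [mem_Icc] at hk hk'
        by_cases hks : M + 1 ≤ k ∧ k ≤ M + N
        · rw [vdCu_zero v N M (k := k + h) (by simp only [mem_Icc]; omega), inner_zero_left]
        · rw [vdCu_zero v N M (k := k) (by simp only [mem_Icc]; omega), inner_zero_right]
    _ = ∑ k ∈ Icc (M+1) (M+N-h), ⟪v (k + h - M), v (k - M)⟫ := by
        refine Finset.sum_congr rfl fun k hk => ?_
        simp only [mem_Icc] at hk
        rw [show vdCu v N M (k + h) = v (k + h - M) from by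
            rw [vdCu]; exact if_pos (by simp only [mem_Icc]; omega),
          show vdCu v N M k = v (k - M) from by
            rw [vdCu]; exact if_pos (by simp only [mem_Icc]; omega)]
    _ = ∑ n ∈ Icc 1 (N - h), ⟪v (n + h), v n⟫ := by
        rw [show Icc (M+1) (M+N-h) = (Icc 1 (N-h)).map (addLeftEmbedding M) from by
          rw [Finset.map_add_left_Icc]; congr 1; omega, Finset.sum_map]
        refine Finset.sum_congr rfl fun n hn => ?_
        simp only [mem_Icc] at hn
        simp only [addLeftEmbedding_apply]
        rw [show M + n + h - M = n + h from by omega, show M + n - M = n from by omega]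

private lemma vdC_tri (c : ℕ → ℝ) (hc : ∀ h, 0 ≤ c h) (M m : ℕ) (hm : m < M) :
    ∑ m' ∈ range M, (if m' ≤ m then c (m - m') else c (m' - m))
      ≤ c 0 + 2 * ∑ h ∈ Icc 1 M, c h := by
  rw [range_eq_Ico, ← Finset.sum_Ico_consecutive _ (Nat.zero_le m) hm.le,
    Finset.sum_eq_sum_Ico_succ_bot hm]
  have h1 : ∑ m' ∈ Ico 0 m, (if m' ≤ m then c (m - m') else c (m' - m))
      ≤ ∑ h ∈ Icc 1 M, c h := by
    rw [Finset.sum_congr rfl (fun m' hm' => if_pos (by simp only [mem_Ico] at hm'; omega))]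
    rw [show (∑ m' ∈ Ico 0 m, c (m - m')) = ∑ h ∈ Icc 1 m, c h from
      Finset.sum_nbij' (fun m' => m - m') (fun h => m - h)
        (fun a ha => by simp only [mem_Ico] at ha; simp only [mem_Icc]; omega)
        (fun b hb => by simp only [mem_Icc] at hb; simp only [mem_Ico]; omega)
        (fun a ha => by simp only [mem_Ico] at ha; show m - (m - a) = a; omega)
        (fun b hb => by simp only [mem_Icc] at hb; show m - (m - b) = b; omega)
        (fun a _ => rfl)]
    exact Finset.sum_le_sum_of_subset_of_nonneg (Finset.Icc_subset_Icc le_rfl hm.le)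
      (fun h _ _ => hc h)
  have h2 : ∑ m' ∈ Ico (m+1) M, (if m' ≤ m then c (m - m') else c (m' - m))
      ≤ ∑ h ∈ Icc 1 M, c h := by
    rw [Finset.sum_congr rfl (fun m' hm' => if_neg (by simp only [mem_Ico] at hm'; omega))]
    rw [show (∑ m' ∈ Ico (m+1) M, c (m' - m)) = ∑ h ∈ Icc 1 (M - 1 - m), c h from
      Finset.sum_nbij' (fun m' => m' - m) (fun h => h + m)
        (fun a ha => by simp only [mem_Ico] at ha; simp only [mem_Icc]; omega)
        (fun b hb => by simp only [mem_Icc] at hb; simp only [mem_Ico]; omega)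
        (fun a ha => by simp only [mem_Ico] at ha; show a - m + m = a; omega)
        (fun b hb => by simp only [mem_Icc] at hb; show b + m - m = b; omega)
        (fun a _ => rfl)]
    exact Finset.sum_le_sum_of_subset_of_nonneg (Finset.Icc_subset_Icc le_rfl (by omega))
      (fun h _ _ => hc h)
  have h3 : (if m ≤ m then c (m - m) else c (m - m)) = c 0 := by
    rw [if_pos le_rfl, Nat.sub_self]
  linarith

end vdCaux

theorem vdC_hilbert {H : Type*} [NormedAddCommGroup H] [InnerProductSpace ℂ H]
    [CompleteSpace H] (v : ℕ → H) (N M : ℕ) (hM : 1 ≤ M) (hMN : M ≤ N) :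
    ‖∑ n ∈ Icc 1 N, v n‖ ^ 2 ≤
      2 * ((N : ℝ) / M) * ∑ n ∈ Icc 1 N, ‖v n‖ ^ 2 +
      4 * ((N : ℝ) / M) * ∑ m ∈ Icc 1 M,
        ‖∑ n ∈ Icc 1 (N - m), (inner ℂ (v (n + m)) (v n) : ℂ)‖ := by
  classical
  set S : H := ∑ n ∈ Icc 1 N, v n with hS
  set E : ℝ := ∑ n ∈ Icc 1 N, ‖v n‖ ^ 2 with hE
  set T : ℝ := ∑ m ∈ Icc 1 M, ‖∑ n ∈ Icc 1 (N - m), (inner ℂ (v (n + m)) (v n) : ℂ)‖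
    with hT
  set I : Finset ℕ := Icc 2 (M+N) with hI
  set u : ℕ → H := vdCu v N M with hu
  set w : ℕ → H := fun n => ∑ m ∈ range M, u (n + m) with hw
  have hMpos : (0:ℝ) < M := by exact_mod_cast hM
  have hEnn : 0 ≤ E := Finset.sum_nonneg fun n _ => by positivity
  have hTnn : 0 ≤ T := Finset.sum_nonneg fun m _ => norm_nonneg _
  -- step 1 : ∑ n ∈ I, w n = M • S
  have hws : ∑ n ∈ I, w n = M • S := by
    rw [hw, Finset.sum_comm]
    rw [Finset.sum_congr rfl fun m hm =>
      (vdCu_shift v N M (mem_range.mp hm)).trans (vdCu_sum v N M)]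
    simp [card_range, hS]
  -- step 2 : Cauchy-Schwarz
  have cs : (M:ℝ)^2 * ‖S‖^2 ≤ (#I : ℝ) * ∑ n ∈ I, ‖w n‖^2 := by
    have h1 : (M:ℝ) * ‖S‖ ≤ ∑ n ∈ I, ‖w n‖ := by
      calc (M:ℝ) * ‖S‖ = ‖(M:ℝ) • S‖ := by
            rw [norm_smul]; simp [abs_of_nonneg hMpos.le]
        _ = ‖∑ n ∈ I, w n‖ := by rw [hws]; norm_num [Nat.cast_smul_eq_nsmul]
        _ ≤ ∑ n ∈ I, ‖w n‖ := norm_sum_le _ _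
    have h2 := sq_sum_le_card_mul_sum_sq (s := I) (f := fun n => ‖w n‖)
    have h3 : ((M:ℝ) * ‖S‖)^2 ≤ (∑ n ∈ I, ‖w n‖)^2 := by
      apply pow_le_pow_left₀ (by positivity) h1
    calc (M:ℝ)^2 * ‖S‖^2 = ((M:ℝ) * ‖S‖)^2 := by ring
      _ ≤ (∑ n ∈ I, ‖w n‖)^2 := h3
      _ ≤ (#I : ℝ) * ∑ n ∈ I, ‖w n‖^2 := h2
  -- step 3 : expand norms
  have hsum : ∑ n ∈ I, ‖w n‖^2
      = Complex.re (∑ m ∈ range M, ∑ m' ∈ range M, ∑ n ∈ I, ⟪u (n+m), u (n+m')⟫) := by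
    have e1 : ∀ n : ℕ, ‖w n‖^2
        = Complex.re (∑ m ∈ range M, ∑ m' ∈ range M, ⟪u (n+m), u (n+m')⟫) := by
      intro n
      have e2 : ⟪w n, w n⟫ = ∑ m ∈ range M, ∑ m' ∈ range M, ⟪u (n+m), u (n+m')⟫ := by
        simp only [hw]
        rw [sum_inner]
        exact Finset.sum_congr rfl fun m _ =>
          inner_sum (range M) (fun m' => u (n+m')) (u (n+m))
      rw [← inner_self_eq_norm_sq (𝕜 := ℂ) (w n), e2]
      rfl
    rw [Finset.sum_congr rfl fun n _ => e1 n, ← Complex.re_sum]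
    congr 1
    rw [Finset.sum_comm]
    exact Finset.sum_congr rfl fun m _ => Finset.sum_comm
  -- step 4 : per-pair bound
  have habs : ∀ m ∈ range M, ∀ m' ∈ range M,
      ‖∑ n ∈ I, ⟪u (n+m), u (n+m')⟫‖
        = if m' ≤ m then ‖∑ n ∈ Icc 1 (N - (m - m')), ⟪v (n + (m - m')), v n⟫‖
          else ‖∑ n ∈ Icc 1 (N - (m' - m)), ⟪v (n + (m' - m)), v n⟫‖ := by
    intro m hm m' hm'
    by_cases hle : m' ≤ m
    · rw [if_pos hle]
      exact congrArg norm (vdCu_B v N M hMN hle (mem_range.mp hm))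
    · rw [if_neg hle]
      have hc : (∑ n ∈ I, ⟪u (n+m), u (n+m')⟫)
          = (starRingEnd ℂ) (∑ n ∈ I, ⟪u (n+m'), u (n+m)⟫) := by
        rw [map_sum]
        exact Finset.sum_congr rfl fun n _ => (inner_conj_symm _ _).symm
      rw [hc, Complex.norm_conj]
      exact congrArg norm
        (vdCu_B v N M hMN (le_of_lt (not_le.mp hle)) (mem_range.mp hm'))
  -- step 5 : per-m bound
  have per : ∀ m ∈ range M,
      ∑ m' ∈ range M, ‖∑ n ∈ I, ⟪u (n+m), u (n+m')⟫‖ ≤ E + 2*T := by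
    intro m hm
    have hmM := mem_range.mp hm
    set c : ℕ → ℝ := fun h => ‖∑ n ∈ Icc 1 (N - h), ⟪v (n + h), v n⟫‖ with hcdef
    have hcn : ∀ h, 0 ≤ c h := fun h => norm_nonneg _
    have step : ∑ m' ∈ range M, ‖∑ n ∈ I, ⟪u (n+m), u (n+m')⟫‖
        = ∑ m' ∈ range M, (if m' ≤ m then c (m - m') else c (m' - m)) := by
      refine Finset.sum_congr rfl fun m' hm' => ?_
      rw [habs m hm m' hm']
    rw [step]
    have hc0 : c 0 = E := by
      have hv : (∑ n ∈ Icc 1 (N - 0), ⟪v (n + 0), v n⟫) = ((E : ℝ) : ℂ) := by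
        rw [hE]
        push_cast
        refine Finset.sum_congr (by rw [Nat.sub_zero]) fun n _ => ?_
        rw [Nat.add_zero]
        exact inner_self_eq_norm_sq_to_K _
      rw [hcdef]
      simp only [hv, Complex.norm_real, Real.norm_eq_abs]
      exact abs_of_nonneg hEnn
    have hcT : ∑ h ∈ Icc 1 M, c h = T := by rw [hT]
    calc ∑ m' ∈ range M, (if m' ≤ m then c (m - m') else c (m' - m))
        ≤ c 0 + 2 * ∑ h ∈ Icc 1 M, c h := vdC_tri c hcn M m hmM
      _ = E + 2*T := by rw [hc0, hcT]
  -- step 6 : total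
  have tot : ∑ n ∈ I, ‖w n‖^2 ≤ M * (E + 2*T) := by
    rw [hsum]
    calc Complex.re (∑ m ∈ range M, ∑ m' ∈ range M, ∑ n ∈ I, ⟪u (n+m), u (n+m')⟫)
        ≤ ‖∑ m ∈ range M, ∑ m' ∈ range M, ∑ n ∈ I, ⟪u (n+m), u (n+m')⟫‖ :=
          Complex.re_le_norm _
      _ ≤ ∑ m ∈ range M, ‖∑ m' ∈ range M, ∑ n ∈ I, ⟪u (n+m), u (n+m')⟫‖ :=
          norm_sum_le _ _
      _ ≤ ∑ m ∈ range M, ∑ m' ∈ range M, ‖∑ n ∈ I, ⟪u (n+m), u (n+m')⟫‖ :=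
          Finset.sum_le_sum fun m _ => norm_sum_le _ _
      _ ≤ ∑ m ∈ range M, (E + 2*T) := Finset.sum_le_sum per
      _ = M * (E + 2*T) := by rw [Finset.sum_const, card_range]; ring
  -- step 7 : combine
  have hcard : (#I : ℝ) ≤ 2 * N := by
    rw [hI, Nat.card_Icc]
    have : M + N + 1 - 2 ≤ 2 * N := by omega
    exact_mod_cast this
  have hwnn : 0 ≤ ∑ n ∈ I, ‖w n‖^2 := Finset.sum_nonneg fun n _ => by positivity
  have main : (M:ℝ)^2 * ‖S‖^2 ≤ 2 * N * (M * (E + 2*T)) := by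
    calc (M:ℝ)^2 * ‖S‖^2 ≤ (#I : ℝ) * ∑ n ∈ I, ‖w n‖^2 := cs
      _ ≤ (2*N) * (M * (E + 2*T)) :=
          mul_le_mul hcard tot hwnn (by positivity)
  calc ‖S‖^2 = ((M:ℝ)^2 * ‖S‖^2) / (M:ℝ)^2 := by field_simp
    _ ≤ (2 * N * (M * (E + 2*T))) / (M:ℝ)^2 := by
        exact div_le_div_of_nonneg_right main (by positivity)
    _ = 2 * ((N:ℝ)/M) * E + 4 * ((N:ℝ)/M) * T := by field_simp; ring
end

section
/- Let 0 < a < b < 1, 0 < δ < 1, ρ > 1, and let (c_n) be a bounded sequence of complex numbers satisfying: (i) ∑_{n=1}^N |c_n| ≤ C N^{1−a} for all N of the form ⌊ρ^k⌋; and (ii) ∑_{k} N_k^{2a−1−b} ∑_{m=1}^{⌊N_k^b⌋} |∑_{n=⌈N_k^{1−δ}⌉}^{N_k−m} c_{n+m} \overline{c_n}| < ∞ where N_k = ⌊ρ^k⌋. Then for every measure-preserving system (X, μ, T) and every f ∈ L²(X, μ), ∑_{k} ‖N_k^{a−1} ∑_{n=1}^{N_k} c_n (f ∘ T^n)‖²_{L²(X)}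 < ∞. -/
open Finset MeasureTheory

section vdc
variable {E : Type*} [NormedAddCommGroup E] [InnerProductSpace ℂ E]

local notation "⟪" x ", " y "⟫" => @inner ℂ _ _ x y

private lemma cs_sum {ι : Type*} (s : Finset ι) (v : ι → E) :
    ‖∑ j ∈ s, v j‖ ^ 2 ≤ (s.card : ℝ) * ∑ j ∈ s, ‖v j‖ ^ 2 := by
  calc ‖∑ j ∈ s, v j‖ ^ 2 ≤ (∑ j ∈ s, ‖v j‖) ^ 2 :=
        pow_le_pow_left₀ (norm_nonneg _) (norm_sum_le s v) 2
    _ ≤ (s.card : ℝ) * ∑ j ∈ s, ‖v j‖ ^ 2 := sq_sum_le_card_mul_sum_sq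

private lemma row_bound (s : ℕ → ℝ) (hs : ∀ d, 0 ≤ s d) (M m : ℕ) (hm : m < M)
    (t : ℕ → ℝ) (ht1 : ∀ m', m' ≤ m → t m' = s (m - m'))
    (ht2 : ∀ m', m ≤ m' → m' < M → t m' = s (m' - m)) :
    ∑ m' ∈ range M, t m' ≤ s 0 + 2 * ∑ d ∈ Icc 1 (M - 1), s d := by
  have hsplit := Finset.sum_filter_add_sum_filter_not (range M)
      (fun m' => m' ≤ m) t
  rw [← hsplit]
  have h1 : ∑ m' ∈ (range M).filter (fun m' => m' ≤ m), t m'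
      ≤ ∑ d ∈ Icc 0 (M - 1), s d := by
    rw [Finset.sum_congr rfl (fun x hx => ht1 x (by simpa using (mem_filter.mp hx).2))]
    rw [← Finset.sum_image (g := fun m' => m - m') (f := s)
      (by intro x hx y hy hxy; simp only [mem_coe, mem_filter] at hx hy hxy; omega)]
    apply Finset.sum_le_sum_of_subset_of_nonneg
    · intro d hd
      simp only [mem_image, mem_filter, mem_range] at hd
      simp only [mem_Icc]
      omega
    · intro i _ _; exact hs i
  have h2 : ∑ m' ∈ (range M).filter (fun m' => ¬ m' ≤ m), t m'
      ≤ ∑ d ∈ Icc 1 (M - 1), s d := by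
    rw [Finset.sum_congr rfl (fun x hx => ht2 x
      (by have := (mem_filter.mp hx).2; omega)
      (by have := mem_range.mp (mem_filter.mp hx).1; omega))]
    rw [← Finset.sum_image (g := fun m' => m' - m) (f := s)
      (by intro x hx y hy hxy; simp only [mem_coe, mem_filter] at hx hy hxy; omega)]
    apply Finset.sum_le_sum_of_subset_of_nonneg
    · intro d hd
      simp only [mem_image, mem_filter, mem_range] at hd
      simp only [mem_Icc]
      omega
    · intro i _ _; exact hs i
  have h0 : ∑ d ∈ Icc 0 (M - 1), s d = s 0 + ∑ d ∈ Icc 1 (M - 1), s d := by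
    have hins : Icc 0 (M - 1) = insert 0 (Icc 1 (M - 1)) := by
      ext x; simp only [mem_Icc, mem_insert]; omega
    rw [hins, Finset.sum_insert (by simp)]
  have := add_le_add h1 h2
  rw [h0] at this
  linarith

set_option maxHeartbeats 1000000 in
theorem vdc_ineq (u : ℕ → E) (R N M : ℕ) (hM : 0 < M) (hRN : R ≤ N) :
    ‖∑ n ∈ Ioc R N, u n‖ ^ 2 ≤
      ((N + M : ℕ) : ℝ) / (M : ℝ) *
        ((∑ n ∈ Ioc R N, ‖u n‖ ^ 2) +
          2 * ∑ d ∈ Icc 1 (M - 1), ‖∑ n ∈ Ioc R (N - d), ⟪u (n + d), u n⟫‖) := by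
  classical
  set p := R + M with hp
  set q := N + M with hq
  set u' : ℕ → E := fun n => if p < n ∧ n ≤ q then u (n - M) else 0 with hu'
  set J : Finset ℕ := Icc (R + 2) q with hJ
  -- u' sums relate to u sums
  have hA : ∑ n ∈ Ioc p q, u' n = ∑ n ∈ Ioc R N, u n := by
    apply Finset.sum_nbij' (fun n => n - M) (fun n => n + M)
    · intro a ha; simp only [mem_Ioc] at ha ⊢; omega
    · intro a ha; simp only [mem_Ioc] at ha ⊢; omega
    · intro a ha; simp only [mem_Ioc] at ha; omega
    · intro a ha; simp only [mem_Ioc] at ha; omega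
    · intro a ha; simp only [mem_Ioc] at ha
      simp only [hu']
      rw [if_pos (by omega)]
  have hSc : ∀ d, ∑ n ∈ Ioc p (q - d), ⟪u' (n + d), u' n⟫
      = ∑ n ∈ Ioc R (N - d), ⟪u (n + d), u n⟫ := by
    intro d
    apply Finset.sum_nbij' (fun n => n - M) (fun n => n + M)
    · intro a ha; simp only [mem_Ioc] at ha ⊢; omega
    · intro a ha; simp only [mem_Ioc] at ha ⊢; omega
    · intro a ha; simp only [mem_Ioc] at ha; omega
    · intro a ha; simp only [mem_Ioc] at ha; omega
    · intro a ha; simp only [mem_Ioc] at ha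
      simp only [hu']
      rw [if_pos (by omega), if_pos (by omega)]
      congr 2 <;> omega
  -- Step 1
  have hper : ∀ m ∈ range M, (∑ j ∈ J, u' (j + m)) = ∑ n ∈ Ioc p q, u' n := by
    intro m hm
    simp only [mem_range] at hm
    rw [show (∑ j ∈ J, u' (j + m)) = ∑ n ∈ Icc (R + 2 + m) (q + m), u' n from
      Finset.sum_nbij' (fun j => j + m) (fun n => n - m)
        (by intro a ha; simp only [hJ, mem_Icc, mem_Ioc] at *; omega)
        (by intro a ha; simp only [hJ, mem_Icc, mem_Ioc] at *; omega)
        (by intro a ha; simp only [hJ, mem_Icc, mem_Ioc] at *; omega)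
        (by intro a ha; simp only [hJ, mem_Icc, mem_Ioc] at *; omega)
        (by intro a ha; rfl)]
    symm
    apply Finset.sum_subset
    · intro n hn; simp only [mem_Ioc] at hn; simp only [mem_Icc]; omega
    · intro n _ hn
      simp only [mem_Ioc] at hn
      simp only [hu']
      rw [if_neg (by omega)]
  have step1 : ∑ j ∈ J, (∑ m ∈ range M, u' (j + m)) = M • ∑ n ∈ Ioc p q, u' n := by
    rw [Finset.sum_comm, Finset.sum_congr rfl hper, Finset.sum_const, card_range]
  -- Step 3a : cross sums
  have step3a : ∀ m m', m' ≤ m → m < M →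
      ∑ j ∈ J, ⟪u' (j + m), u' (j + m')⟫
        = ∑ n ∈ Ioc p (q - (m - m')), ⟪u' (n + (m - m')), u' n⟫ := by
    intro m m' hmm' hmM
    rw [show (∑ j ∈ J, ⟪u' (j + m), u' (j + m')⟫)
        = ∑ n ∈ Icc (R + 2 + m') (q + m'), ⟪u' (n + (m - m')), u' n⟫ from
      Finset.sum_nbij' (fun j => j + m') (fun n => n - m')
        (by intro a ha; simp only [hJ, mem_Icc, mem_Ioc] at *; omega)
        (by intro a ha; simp only [hJ, mem_Icc, mem_Ioc] at *; omega)
        (by intro a ha; simp only [hJ, mem_Icc, mem_Ioc] at *; omega)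
        (by intro a ha; simp only [hJ, mem_Icc, mem_Ioc] at *; omega)
        (by intro a ha; congr 2; omega)]
    symm
    apply Finset.sum_subset
    · intro n hn; simp only [mem_Ioc] at hn; simp only [mem_Icc]; omega
    · intro n hn' hn
      simp only [mem_Icc] at hn'
      simp only [mem_Ioc] at hn
      rcases Nat.lt_or_ge p n with h | h
      · rw [show u' (n + (m - m')) = 0 from by simp only [hu']; rw [if_neg (by omega)]]
        exact inner_zero_left _
      · rw [show u' n = 0 from by simp only [hu']; rw [if_neg (by omega)]]
        exact inner_zero_right _
  -- norms of u' sums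
  have hB : ∑ n ∈ Ioc p q, ‖u' n‖ ^ 2 = ∑ n ∈ Ioc R N, ‖u n‖ ^ 2 := by
    apply Finset.sum_nbij' (fun n => n - M) (fun n => n + M)
    · intro a ha; simp only [hJ, mem_Icc, mem_Ioc] at *; omega
    · intro a ha; simp only [hJ, mem_Icc, mem_Ioc] at *; omega
    · intro a ha; simp only [hJ, mem_Icc, mem_Ioc] at *; omega
    · intro a ha; simp only [hJ, mem_Icc, mem_Ioc] at *; omega
    · intro a ha; simp only [mem_Ioc] at ha
      simp only [hu']
      rw [if_pos (by omega)]
  set Sc : ℕ → ℂ := fun d => ∑ n ∈ Ioc p (q - d), ⟪u' (n + d), u' n⟫ with hScdef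
  have hs0 : ‖Sc 0‖ = ∑ n ∈ Ioc p q, ‖u' n‖ ^ 2 := by
    have : Sc 0 = ((∑ n ∈ Ioc p q, ‖u' n‖ ^ 2 : ℝ) : ℂ) := by
      simp only [hScdef, Nat.sub_zero, add_zero]
      rw [Complex.ofReal_sum]
      refine Finset.sum_congr rfl fun n _ => ?_
      rw [inner_self_eq_norm_sq_to_K]
      norm_cast
    rw [this, Complex.norm_real]
    exact abs_of_nonneg (Finset.sum_nonneg fun n _ => by positivity)
  -- Step 3
  have step3 : ∑ j ∈ J, ‖∑ m ∈ range M, u' (j + m)‖ ^ 2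
      ≤ (M : ℝ) * (‖Sc 0‖ + 2 * ∑ d ∈ Icc 1 (M - 1), ‖Sc d‖) := by
    have expand : ∀ j : ℕ, (‖∑ m ∈ range M, u' (j + m)‖ : ℝ) ^ 2
        = RCLike.re (∑ m ∈ range M, ∑ m' ∈ range M, ⟪u' (j + m), u' (j + m')⟫) := by
      intro j
      rw [← @inner_self_eq_norm_sq ℂ]
      congr 1
      rw [sum_inner]
      exact Finset.sum_congr rfl fun m _ => inner_sum _ _ _
    calc ∑ j ∈ J, ‖∑ m ∈ range M, u' (j + m)‖ ^ 2
        = ∑ m ∈ range M, ∑ m' ∈ range M,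
            RCLike.re (∑ j ∈ J, ⟪u' (j + m), u' (j + m')⟫) := by
          rw [Finset.sum_congr rfl fun j _ => expand j, ← map_sum]
          have hsw : ∑ j ∈ J, ∑ m ∈ range M, ∑ m' ∈ range M, ⟪u' (j + m), u' (j + m')⟫
              = ∑ m ∈ range M, ∑ m' ∈ range M, ∑ j ∈ J, ⟪u' (j + m), u' (j + m')⟫ := by
            rw [Finset.sum_comm]
            exact Finset.sum_congr rfl fun m _ => Finset.sum_comm
          rw [hsw, map_sum]
          exact Finset.sum_congr rfl fun m _ => map_sum _ _ _
      _ ≤ ∑ m ∈ range M, ∑ m' ∈ range M, ‖∑ j ∈ J, ⟪u' (j + m), u' (j + m')⟫‖ := by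
          refine Finset.sum_le_sum fun m _ => Finset.sum_le_sum fun m' _ => ?_
          exact Complex.re_le_norm _
      _ ≤ ∑ m ∈ range M, (‖Sc 0‖ + 2 * ∑ d ∈ Icc 1 (M - 1), ‖Sc d‖) := by
          refine Finset.sum_le_sum fun m hm => ?_
          simp only [mem_range] at hm
          refine row_bound (fun d => ‖Sc d‖) (fun d => norm_nonneg _) M m hm _ ?_ ?_
          · intro m' hm'
            rw [step3a m m' hm' hm]
          · intro m' hm' hm'M
            have hconj : ∑ j ∈ J, ⟪u' (j + m), u' (j + m')⟫
                = (starRingEnd ℂ) (∑ j ∈ J, ⟪u' (j + m'), u' (j + m)⟫) := by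
              rw [map_sum]
              exact Finset.sum_congr rfl fun j _ => (inner_conj_symm _ _).symm
            rw [hconj, RCLike.norm_conj, step3a m' m hm' hm'M]
      _ = (M : ℝ) * (‖Sc 0‖ + 2 * ∑ d ∈ Icc 1 (M - 1), ‖Sc d‖) := by
          rw [Finset.sum_const, card_range, nsmul_eq_mul]
  -- combine
  have hX0 : (0 : ℝ) ≤ ‖Sc 0‖ + 2 * ∑ d ∈ Icc 1 (M - 1), ‖Sc d‖ :=
    add_nonneg (norm_nonneg _) (mul_nonneg (by norm_num)
      (Finset.sum_nonneg fun d _ => norm_nonneg _))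
  have hM0 : (0 : ℝ) < M := by exact_mod_cast hM
  have hcards : (J.card : ℝ) ≤ ((N + M : ℕ) : ℝ) := by
    have : J.card ≤ N + M := by
      rw [hJ, Nat.card_Icc]; omega
    exact_mod_cast this
  have key : (M : ℝ) ^ 2 * ‖∑ n ∈ Ioc R N, u n‖ ^ 2
      ≤ ((N + M : ℕ) : ℝ) * ((M : ℝ) * (‖Sc 0‖ + 2 * ∑ d ∈ Icc 1 (M - 1), ‖Sc d‖)) := by
    have hnorm : (M : ℝ) ^ 2 * ‖∑ n ∈ Ioc R N, u n‖ ^ 2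
        = ‖∑ j ∈ J, ∑ m ∈ range M, u' (j + m)‖ ^ 2 := by
      rw [step1, hA, ← Nat.cast_smul_eq_nsmul ℝ, norm_smul]
      rw [Real.norm_natCast, mul_pow]
    rw [hnorm]
    calc ‖∑ j ∈ J, ∑ m ∈ range M, u' (j + m)‖ ^ 2
        ≤ (J.card : ℝ) * ∑ j ∈ J, ‖∑ m ∈ range M, u' (j + m)‖ ^ 2 :=
          cs_sum J _
      _ ≤ ((N + M : ℕ) : ℝ) * ((M : ℝ) * (‖Sc 0‖ + 2 * ∑ d ∈ Icc 1 (M - 1), ‖Sc d‖)) := by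
          apply mul_le_mul hcards step3
            (Finset.sum_nonneg fun j _ => pow_nonneg (norm_nonneg _) 2)
            (Nat.cast_nonneg _)
  have hfinal : ‖∑ n ∈ Ioc R N, u n‖ ^ 2
      ≤ ((N + M : ℕ) : ℝ) / (M : ℝ) * (‖Sc 0‖ + 2 * ∑ d ∈ Icc 1 (M - 1), ‖Sc d‖) := by
    rw [div_mul_eq_mul_div, le_div_iff₀ hM0]
    nlinarith [key, hM0]
  calc ‖∑ n ∈ Ioc R N, u n‖ ^ 2
      ≤ ((N + M : ℕ) : ℝ) / (M : ℝ) * (‖Sc 0‖ + 2 * ∑ d ∈ Icc 1 (M - 1), ‖Sc d‖) := hfinal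
    _ = ((N + M : ℕ) : ℝ) / (M : ℝ) *
        ((∑ n ∈ Ioc R N, ‖u n‖ ^ 2) +
          2 * ∑ d ∈ Icc 1 (M - 1), ‖∑ n ∈ Ioc R (N - d), ⟪u (n + d), u n⟫‖) := by
      have hnormsum : ∀ d : ℕ, ‖Sc d‖ = ‖∑ n ∈ Ioc R (N - d), ⟪u (n + d), u n⟫‖ := by
        intro d
        rw [hScdef]
        simp only
        rw [hSc d]
      rw [hs0, hB, Finset.sum_congr rfl (fun d _ => hnormsum d)]


end vdc

open scoped ENNReal


local notation "⟪" x ", " y "⟫" => @inner ℂ _ _ x y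

set_option maxHeartbeats 2000000 in
theorem weighted_criterion (a b δ ρ : ℝ) (hab : a < b) (ha : 0 < a) (hb : b < 1)
    (hδ0 : 0 < δ) (hδ1 : δ < 1) (hρ : 1 < ρ)
    (c : ℕ → ℂ) (hbdd : ∃ B, ∀ n, ‖c n‖ ≤ B)
    (hsum : ∃ C, ∀ k : ℕ, ∑ n ∈ Icc 1 (⌊ρ ^ k⌋₊), ‖c n‖ ≤ C * (⌊ρ ^ k⌋₊ : ℝ) ^ (1 - a))
    (hcorr : Summable (fun k : ℕ =>
      (⌊ρ ^ k⌋₊ : ℝ) ^ (2 * a - 1 - b) *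
        ∑ m ∈ Icc 1 (⌊(⌊ρ ^ k⌋₊ : ℝ) ^ b⌋₊),
          ‖∑ n ∈ Icc (⌈(⌊ρ ^ k⌋₊ : ℝ) ^ (1 - δ)⌉₊) (⌊ρ ^ k⌋₊ - m),
              c (n + m) * (starRingEnd ℂ) (c n)‖)) :
    ∀ {X : Type} [MeasurableSpace X] (μ : Measure X) [IsProbabilityMeasure μ]
      (T : X → X), MeasurePreserving T μ μ → ∀ f : X → ℂ, MemLp f 2 μ →
      Summable (fun k : ℕ =>
        ∫ x, ‖((⌊ρ ^ k⌋₊ : ℝ) ^ (a - 1) : ℝ) •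
            ∑ n ∈ Icc 1 (⌊ρ ^ k⌋₊), c n * f (T^[n] x)‖ ^ 2 ∂μ) := by
  intro X mX μ hPM T hT f hf
  classical
  haveI : Fact ((1 : ℝ≥0∞) ≤ 2) := ⟨one_le_two⟩
  obtain ⟨B, hB⟩ := hbdd
  obtain ⟨C, hC⟩ := hsum
  have ha1 : a < 1 := lt_trans hab hb
  have hb0 : 0 < b := lt_trans ha hab
  have hρ0 : (0 : ℝ) < ρ := lt_trans one_pos hρ
  have hB0 : 0 ≤ B := le_trans (norm_nonneg _) (hB 0)
  have hC0 : 0 ≤ C := by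
    have h0 := hC 0
    simp only [pow_zero, Nat.floor_one, Nat.cast_one, Real.one_rpow, mul_one,
      Finset.Icc_self, Finset.sum_singleton] at h0
    exact le_trans (norm_nonneg _) h0
  set C1 : ℝ := C * ρ ^ (1 - a) with hC1def
  have hC10 : 0 ≤ C1 := mul_nonneg hC0 (Real.rpow_nonneg hρ0.le _)
  -- initial-segment estimate for arbitrary L
  have hinit : ∀ L : ℕ, ∑ n ∈ Icc 1 L, ‖c n‖ ≤ C1 * (L : ℝ) ^ (1 - a) := by
    intro L
    rcases Nat.eq_zero_or_pos L with hL | hL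
    · subst hL
      simp only [Nat.cast_zero, Real.zero_rpow (by linarith : (1 : ℝ) - a ≠ 0), mul_zero]
      simp
    · have hL1 : (1 : ℝ) ≤ (L : ℝ) := by exact_mod_cast hL
      have hL0 : (0 : ℝ) < (L : ℝ) := by linarith
      set k' : ℕ := ⌈Real.logb ρ L⌉₊ with hk'
      have hlogb0 : 0 ≤ Real.logb ρ L := Real.logb_nonneg hρ hL1
      have hρL : ρ ^ Real.logb ρ (L : ℝ) = (L : ℝ) := Real.rpow_logb hρ0 (ne_of_gt hρ) hL0
      have hup : (L : ℝ) ≤ ρ ^ k' := by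
        calc (L : ℝ) = ρ ^ Real.logb ρ (L : ℝ) := hρL.symm
          _ ≤ ρ ^ ((k' : ℝ)) := Real.rpow_le_rpow_of_exponent_le hρ.le (Nat.le_ceil _)
          _ = ρ ^ k' := Real.rpow_natCast ρ k'
      have hLfloor : L ≤ ⌊ρ ^ k'⌋₊ := Nat.le_floor (by exact_mod_cast hup)
      have hflo : (⌊ρ ^ k'⌋₊ : ℝ) ≤ ρ * L := by
        calc (⌊ρ ^ k'⌋₊ : ℝ) ≤ ρ ^ k' := Nat.floor_le (pow_nonneg hρ0.le _)
          _ = ρ ^ ((k' : ℝ)) := (Real.rpow_natCast ρ k').symm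
          _ ≤ ρ ^ (Real.logb ρ (L : ℝ) + 1) :=
              Real.rpow_le_rpow_of_exponent_le hρ.le (Nat.ceil_lt_add_one hlogb0).le
          _ = ρ ^ Real.logb ρ (L : ℝ) * ρ := by rw [Real.rpow_add hρ0, Real.rpow_one]
          _ = ρ * L := by rw [hρL]; ring
      calc ∑ n ∈ Icc 1 L, ‖c n‖ ≤ ∑ n ∈ Icc 1 ⌊ρ ^ k'⌋₊, ‖c n‖ :=
            Finset.sum_le_sum_of_subset_of_nonneg
              (Finset.Icc_subset_Icc_right hLfloor) (fun i _ _ => norm_nonneg _)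
        _ ≤ C * (⌊ρ ^ k'⌋₊ : ℝ) ^ (1 - a) := hC k'
        _ ≤ C * (ρ * L) ^ (1 - a) := by
            apply mul_le_mul_of_nonneg_left _ hC0
            exact Real.rpow_le_rpow (Nat.cast_nonneg _) hflo (by linarith)
        _ = C1 * (L : ℝ) ^ (1 - a) := by
            rw [Real.mul_rpow hρ0.le (Nat.cast_nonneg _), hC1def]; ring
  -- Lp space setup
  set F : ℕ → Lp ℂ 2 μ :=
    fun n => MemLp.toLp _ (hf.comp_measurePreserving (hT.iterate n)) with hF
  set κ : ℝ := ‖F 0‖ with hκdef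
  have hκ0 : 0 ≤ κ := norm_nonneg _
  have hκ : ∀ n, ‖F n‖ = κ := by
    intro n
    rw [hκdef, hF]
    simp only
    rw [Lp.norm_toLp, Lp.norm_toLp,
      eLpNorm_comp_measurePreserving hf.1 (hT.iterate n),
      eLpNorm_comp_measurePreserving hf.1 (hT.iterate 0)]
  have hFae : ∀ n : ℕ, ⇑(F n) =ᵐ[μ] fun x => f (T^[n] x) :=
    fun n => MemLp.coeFn_toLp _
  -- correlation only depends on the gap
  have hFin : ∀ n d : ℕ, ⟪F (n + d), F n⟫ = ⟪F d, F 0⟫ := by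
    intro n d
    have hg : AEStronglyMeasurable (fun y => (⟪f (T^[d] y), f y⟫ : ℂ)) μ :=
      AEStronglyMeasurable.inner (hf.comp_measurePreserving (hT.iterate d)).1 hf.1
    have h1 : ⟪F (n + d), F n⟫ = ∫ x, (⟪f (T^[d] (T^[n] x)), f (T^[n] x)⟫ : ℂ) ∂μ := by
      rw [MeasureTheory.L2.inner_def]
      apply integral_congr_ae
      filter_upwards [hFae (n + d), hFae n] with x h1 h2
      rw [h1, h2, show n + d = d + n from add_comm n d, Function.iterate_add_apply]
    have h2 : ⟪F d, F 0⟫ = ∫ x, (⟪f (T^[d] x), f x⟫ : ℂ) ∂μ := by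
      rw [MeasureTheory.L2.inner_def]
      apply integral_congr_ae
      filter_upwards [hFae d, hFae 0] with x h1 h2
      rw [h1, h2]
      simp
    rw [h1, h2]
    have hmap : Measure.map (T^[n]) μ = μ := (hT.iterate n).map_eq
    conv_rhs => rw [← hmap]
    rw [integral_map (hT.iterate n).measurable.aemeasurable (by rwa [hmap])]
  have hγ : ∀ d : ℕ, ‖(⟪F d, F 0⟫ : ℂ)‖ ≤ κ ^ 2 := by
    intro d
    calc ‖(⟪F d, F 0⟫ : ℂ)‖ ≤ ‖F d‖ * ‖F 0‖ := norm_inner_le_norm _ _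
      _ = κ ^ 2 := by rw [hκ d, hκ 0, sq]
  set U : ℕ → Lp ℂ 2 μ := fun n => c n • F n with hU
  have hUae : ∀ s : Finset ℕ,
      ⇑(∑ n ∈ s, U n) =ᵐ[μ] fun x => ∑ n ∈ s, c n * f (T^[n] x) := by
    intro s
    induction s using Finset.induction_on with
    | empty =>
        simp only [Finset.sum_empty]
        filter_upwards [Lp.coeFn_zero (E := ℂ) (p := 2) (μ := μ)] with x hx
        simpa using hx
    | @insert n s' hnotmem ih =>
        rw [Finset.sum_insert hnotmem]
        filter_upwards [Lp.coeFn_add (U n) (∑ m ∈ s', U m), ih,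
          Lp.coeFn_smul (c n) (F n), hFae n] with x hx hihx hsx hfx
        rw [hx, Finset.sum_insert hnotmem]
        simp only [Pi.add_apply]
        rw [hihx, hsx]
        simp only [Pi.smul_apply, smul_eq_mul, hfx]
  have hnormL2 : ∀ G : Lp ℂ 2 μ, ∫ x, ‖G x‖ ^ 2 ∂μ = ‖G‖ ^ 2 := by
    intro G
    rw [← inner_self_eq_norm_sq (𝕜 := ℂ) G, MeasureTheory.L2.inner_def,
      ← integral_re (L2.integrable_inner G G)]
    exact integral_congr_ae (Filter.Eventually.of_forall fun x =>
      (inner_self_eq_norm_sq (𝕜 := ℂ) _).symm)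
  -- norms of U
  have hUnorm : ∀ n, ‖U n‖ = ‖c n‖ * κ := by
    intro n
    rw [hU]
    simp only
    rw [norm_smul, hκ n]
  set H : ℕ → ℝ := fun k => ∑ m ∈ Icc 1 (⌊(⌊ρ ^ k⌋₊ : ℝ) ^ b⌋₊),
      ‖∑ n ∈ Icc (⌈(⌊ρ ^ k⌋₊ : ℝ) ^ (1 - δ)⌉₊) (⌊ρ ^ k⌋₊ - m),
        c (n + m) * (starRingEnd ℂ) (c n)‖ with hH
  -- geometric comparison for negative exponents
  have hgeo : ∀ e : ℝ, e < 0 → Summable (fun k : ℕ => (⌊ρ ^ k⌋₊ : ℝ) ^ e) := by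
    intro e he
    have hterm : ∀ k : ℕ, (⌊ρ ^ k⌋₊ : ℝ) ^ e ≤ (2 : ℝ) ^ (-e) * (ρ ^ e) ^ k := by
      intro k
      have hxk1 : (1 : ℝ) ≤ ρ ^ k := one_le_pow₀ hρ.le
      have hxk0 : (0 : ℝ) < ρ ^ k := by positivity
      have hflo2 : ρ ^ k / 2 ≤ (⌊ρ ^ k⌋₊ : ℝ) := by
        rcases le_or_gt 2 (ρ ^ k) with h2 | h2
        · have := Nat.sub_one_lt_floor (ρ ^ k)
          linarith
        · have h1 : (1 : ℕ) ≤ ⌊ρ ^ k⌋₊ := Nat.le_floor (by exact_mod_cast hxk1)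
          have : (1 : ℝ) ≤ (⌊ρ ^ k⌋₊ : ℝ) := by exact_mod_cast h1
          linarith
      have hfl0 : (0 : ℝ) < ρ ^ k / 2 := by linarith
      calc (⌊ρ ^ k⌋₊ : ℝ) ^ e ≤ (ρ ^ k / 2) ^ e :=
            Real.rpow_le_rpow_of_nonpos hfl0 hflo2 he.le
        _ = (ρ ^ k) ^ e / 2 ^ e := Real.div_rpow hxk0.le (by norm_num) e
        _ = (2 : ℝ) ^ (-e) * (ρ ^ e) ^ k := by
            rw [Real.rpow_neg (by norm_num : (0:ℝ) ≤ 2)]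
            rw [← Real.rpow_natCast ρ k, ← Real.rpow_mul hρ0.le, mul_comm (k : ℝ) e,
              Real.rpow_mul hρ0.le, Real.rpow_natCast]
            rw [div_eq_mul_inv, mul_comm]
    have hgeom : Summable (fun k : ℕ => (2 : ℝ) ^ (-e) * (ρ ^ e) ^ k) :=
      (summable_geometric_of_lt_one (Real.rpow_nonneg hρ0.le e)
        (Real.rpow_lt_one_of_one_lt_of_neg hρ he)).mul_left _
    exact Summable.of_nonneg_of_le
      (fun k => Real.rpow_nonneg (Nat.cast_nonneg _) e) hterm hgeom
  -- the per-k estimate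
  have hAle : ∀ k : ℕ, (∫ x, ‖((⌊ρ ^ k⌋₊ : ℝ) ^ (a - 1) : ℝ) •
        ∑ n ∈ Icc 1 (⌊ρ ^ k⌋₊), c n * f (T^[n] x)‖ ^ 2 ∂μ)
      ≤ 2 * (κ * C1) ^ 2 * (⌊ρ ^ k⌋₊ : ℝ) ^ (-(2 * δ * (1 - a)))
        + (8 * (B * C * κ ^ 2) * (⌊ρ ^ k⌋₊ : ℝ) ^ (a - b)
          + 16 * κ ^ 2 * ((⌊ρ ^ k⌋₊ : ℝ) ^ (2 * a - 1 - b) * H k)) := by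
    intro k
    set N : ℕ := ⌊ρ ^ k⌋₊ with hNdef
    have hN1 : 1 ≤ N := by
      rw [hNdef]
      exact Nat.le_floor (by exact_mod_cast (one_le_pow₀ hρ.le : (1:ℝ) ≤ ρ ^ k))
    have hx1 : (1 : ℝ) ≤ (N : ℝ) := by exact_mod_cast hN1
    have hx0 : (0 : ℝ) < (N : ℝ) := by linarith
    set R : ℕ := ⌈(N : ℝ) ^ (1 - δ)⌉₊ - 1 with hRdef
    set M : ℕ := ⌊(N : ℝ) ^ b⌋₊ with hMdef
    set r : ℝ := (N : ℝ) ^ (a - 1) with hrdef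
    have hr0 : (0 : ℝ) ≤ r := Real.rpow_nonneg (Nat.cast_nonneg _) _
    have hr2 : (0 : ℝ) ≤ r ^ 2 := sq_nonneg r
    have hceil1 : 0 < ⌈(N : ℝ) ^ (1 - δ)⌉₊ :=
      Nat.ceil_pos.mpr (Real.rpow_pos_of_pos hx0 _)
    have hR1 : R + 1 = ⌈(N : ℝ) ^ (1 - δ)⌉₊ := by omega
    have hRfl : R ≤ ⌊(N : ℝ) ^ (1 - δ)⌋₊ := by
      have := Nat.ceil_le_floor_add_one ((N : ℝ) ^ (1 - δ)); omega
    have hRx : (R : ℝ) ≤ (N : ℝ) ^ (1 - δ) :=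
      le_trans (by exact_mod_cast hRfl) (Nat.floor_le (by positivity))
    have hx1δ : (N : ℝ) ^ (1 - δ) ≤ (N : ℝ) := by
      calc (N : ℝ) ^ (1 - δ) ≤ (N : ℝ) ^ (1 : ℝ) :=
            Real.rpow_le_rpow_of_exponent_le hx1 (by linarith)
        _ = (N : ℝ) := Real.rpow_one _
    have hRN : R ≤ N := by
      have h : (R : ℝ) ≤ (N : ℝ) := le_trans hRx hx1δ
      exact_mod_cast h
    have hxb1 : (1 : ℝ) ≤ (N : ℝ) ^ b := by
      calc (1 : ℝ) = (N : ℝ) ^ (0 : ℝ) := (Real.rpow_zero _).symm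
        _ ≤ (N : ℝ) ^ b := Real.rpow_le_rpow_of_exponent_le hx1 hb0.le
    have hM1 : 0 < M := by
      have h : (1 : ℕ) ≤ M := by
        rw [hMdef]; exact Nat.le_floor (by exact_mod_cast hxb1)
      omega
    have hMx : (M : ℝ) ≤ (N : ℝ) := by
      calc (M : ℝ) ≤ (N : ℝ) ^ b := Nat.floor_le (by positivity)
        _ ≤ (N : ℝ) ^ (1 : ℝ) := Real.rpow_le_rpow_of_exponent_le hx1 hb.le
        _ = (N : ℝ) := Real.rpow_one _
    have hMlow : (N : ℝ) ^ b / 2 ≤ (M : ℝ) := by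
      rcases le_or_gt 2 ((N : ℝ) ^ b) with h2 | h2
      · have := Nat.sub_one_lt_floor ((N : ℝ) ^ b)
        rw [hMdef]; linarith
      · have h1 : (1 : ℝ) ≤ (M : ℝ) := by exact_mod_cast hM1
        linarith
    have hxadd : ∀ s t : ℝ, (N : ℝ) ^ s * (N : ℝ) ^ t = (N : ℝ) ^ (s + t) :=
      fun s t => (Real.rpow_add hx0 s t).symm
    -- identify H k
    have hHk : H k = ∑ m ∈ Icc 1 M,
        ‖∑ n ∈ Icc (R + 1) (N - m), c (n + m) * (starRingEnd ℂ) (c n)‖ := by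
      simp only [hH]
      rw [← hNdef, ← hMdef, ← hR1]
    -- rewrite the integral as an Lp-norm
    have step_eq : (∫ x, ‖(r : ℝ) • ∑ n ∈ Icc 1 N, c n * f (T^[n] x)‖ ^ 2 ∂μ)
        = r ^ 2 * ‖∑ n ∈ Icc 1 N, U n‖ ^ 2 := by
      calc (∫ x, ‖(r : ℝ) • ∑ n ∈ Icc 1 N, c n * f (T^[n] x)‖ ^ 2 ∂μ)
          = ∫ x, ‖(r : ℝ) • (∑ n ∈ Icc 1 N, U n) x‖ ^ 2 ∂μ := by
            refine integral_congr_ae ?_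
            filter_upwards [hUae (Icc 1 N)] with x hx
            rw [hx]
        _ = ∫ x, r ^ 2 * ‖(∑ n ∈ Icc 1 N, U n) x‖ ^ 2 ∂μ := by
            refine integral_congr_ae (Filter.Eventually.of_forall fun x => ?_)
            simp only [norm_smul, Real.norm_eq_abs, abs_of_nonneg hr0, mul_pow]
        _ = r ^ 2 * ∫ x, ‖(∑ n ∈ Icc 1 N, U n) x‖ ^ 2 ∂μ := integral_const_mul _ _
        _ = r ^ 2 * ‖∑ n ∈ Icc 1 N, U n‖ ^ 2 := by rw [hnormL2]
    rw [step_eq]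
    -- split off the initial segment
    have hsplit : (∑ n ∈ Icc 1 N, U n) = (∑ n ∈ Ioc 0 R, U n) + ∑ n ∈ Ioc R N, U n := by
      rw [Finset.sum_Ioc_consecutive _ (Nat.zero_le R) hRN]
      apply Finset.sum_congr _ (fun _ _ => rfl)
      ext i; simp only [mem_Icc, mem_Ioc]; omega
    have hGPQ : ‖∑ n ∈ Icc 1 N, U n‖ ^ 2
        ≤ 2 * ‖∑ n ∈ Ioc 0 R, U n‖ ^ 2 + 2 * ‖∑ n ∈ Ioc R N, U n‖ ^ 2 := by
      have h1 : ‖∑ n ∈ Icc 1 N, U n‖ ≤ ‖∑ n ∈ Ioc 0 R, U n‖ + ‖∑ n ∈ Ioc R N, U n‖ := by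
        rw [hsplit]; exact norm_add_le _ _
      have h3 : ‖∑ n ∈ Icc 1 N, U n‖ ^ 2
          ≤ (‖∑ n ∈ Ioc 0 R, U n‖ + ‖∑ n ∈ Ioc R N, U n‖) ^ 2 :=
        pow_le_pow_left₀ (norm_nonneg _) h1 2
      have h2 : (‖∑ n ∈ Ioc 0 R, U n‖ + ‖∑ n ∈ Ioc R N, U n‖) ^ 2
          ≤ 2 * ‖∑ n ∈ Ioc 0 R, U n‖ ^ 2 + 2 * ‖∑ n ∈ Ioc R N, U n‖ ^ 2 := by
        nlinarith [sq_nonneg (‖∑ n ∈ Ioc 0 R, U n‖ - ‖∑ n ∈ Ioc R N, U n‖)]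
      exact h3.trans h2
    -- initial-segment bound
    have hPle : ‖∑ n ∈ Ioc 0 R, U n‖ ≤ C1 * (N : ℝ) ^ ((1 - δ) * (1 - a)) * κ := by
      calc ‖∑ n ∈ Ioc 0 R, U n‖ ≤ ∑ n ∈ Ioc 0 R, ‖U n‖ := norm_sum_le _ _
        _ = (∑ n ∈ Icc 1 R, ‖c n‖) * κ := by
            rw [Finset.sum_mul]
            apply Finset.sum_congr (by ext i; simp only [mem_Icc, mem_Ioc]; omega)
            intro n _; rw [hUnorm n]
        _ ≤ (C1 * (R : ℝ) ^ (1 - a)) * κ := mul_le_mul_of_nonneg_right (hinit R) hκ0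
        _ ≤ C1 * (N : ℝ) ^ ((1 - δ) * (1 - a)) * κ := by
            apply mul_le_mul_of_nonneg_right _ hκ0
            apply mul_le_mul_of_nonneg_left _ hC10
            rw [Real.rpow_mul (le_of_lt hx0)]
            exact Real.rpow_le_rpow (Nat.cast_nonneg _) hRx (by linarith)
    -- van der Corput for the main part
    have hvdc := vdc_ineq U R N M hM1 hRN
    have hS0 : (∑ n ∈ Ioc R N, ‖U n‖ ^ 2) ≤ B * C * κ ^ 2 * (N : ℝ) ^ (1 - a) := by
      calc ∑ n ∈ Ioc R N, ‖U n‖ ^ 2 ≤ ∑ n ∈ Ioc R N, B * ‖c n‖ * κ ^ 2 := by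
            apply Finset.sum_le_sum
            intro n _
            rw [hUnorm n, mul_pow]
            have h1 : ‖c n‖ ^ 2 ≤ B * ‖c n‖ := by nlinarith [norm_nonneg (c n), hB n]
            exact mul_le_mul_of_nonneg_right h1 (sq_nonneg κ)
        _ = B * κ ^ 2 * ∑ n ∈ Ioc R N, ‖c n‖ := by
            rw [Finset.mul_sum]; exact Finset.sum_congr rfl fun n _ => by ring
        _ ≤ B * κ ^ 2 * ∑ n ∈ Icc 1 N, ‖c n‖ := by
            apply mul_le_mul_of_nonneg_left _ (by positivity)
            apply Finset.sum_le_sum_of_subset_of_nonneg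
            · intro i hi; simp only [mem_Icc, mem_Ioc] at *; omega
            · intro i _ _; exact norm_nonneg _
        _ ≤ B * κ ^ 2 * (C * (N : ℝ) ^ (1 - a)) :=
            mul_le_mul_of_nonneg_left (hC k) (by positivity)
        _ = B * C * κ ^ 2 * (N : ℝ) ^ (1 - a) := by ring
    have hW : ∀ d : ℕ, ‖∑ n ∈ Ioc R (N - d), ⟪U (n + d), U n⟫‖
        ≤ κ ^ 2 * ‖∑ n ∈ Icc (R + 1) (N - d), c (n + d) * (starRingEnd ℂ) (c n)‖ := by
      intro d
      have hterm : ∀ n : ℕ, ⟪U (n + d), U n⟫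
          = (starRingEnd ℂ) (c (n + d) * (starRingEnd ℂ) (c n)) * ⟪F d, F 0⟫ := by
        intro n
        rw [hU]
        simp only
        rw [inner_smul_left, inner_smul_right, hFin n d, map_mul, Complex.conj_conj]
        ring
      have hset : Ioc R (N - d) = Icc (R + 1) (N - d) := by
        ext i; simp only [mem_Ioc, mem_Icc]; omega
      calc ‖∑ n ∈ Ioc R (N - d), ⟪U (n + d), U n⟫‖
          = ‖(starRingEnd ℂ) (∑ n ∈ Icc (R + 1) (N - d),
              c (n + d) * (starRingEnd ℂ) (c n)) * ⟪F d, F 0⟫‖ := by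
            rw [hset, Finset.sum_congr rfl (fun n _ => hterm n), ← Finset.sum_mul, ← map_sum]
        _ = ‖∑ n ∈ Icc (R + 1) (N - d), c (n + d) * (starRingEnd ℂ) (c n)‖
              * ‖(⟪F d, F 0⟫ : ℂ)‖ := by rw [norm_mul, RCLike.norm_conj]
        _ ≤ ‖∑ n ∈ Icc (R + 1) (N - d), c (n + d) * (starRingEnd ℂ) (c n)‖ * κ ^ 2 :=
            mul_le_mul_of_nonneg_left (hγ d) (norm_nonneg _)
        _ = κ ^ 2 * ‖∑ n ∈ Icc (R + 1) (N - d), c (n + d) * (starRingEnd ℂ) (c n)‖ :=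
            mul_comm _ _
    have hSig : ∑ d ∈ Icc 1 (M - 1), ‖∑ n ∈ Ioc R (N - d), ⟪U (n + d), U n⟫‖
        ≤ κ ^ 2 * H k := by
      rw [hHk]
      calc ∑ d ∈ Icc 1 (M - 1), ‖∑ n ∈ Ioc R (N - d), ⟪U (n + d), U n⟫‖
          ≤ ∑ d ∈ Icc 1 (M - 1),
              κ ^ 2 * ‖∑ n ∈ Icc (R + 1) (N - d), c (n + d) * (starRingEnd ℂ) (c n)‖ :=
            Finset.sum_le_sum fun d _ => hW d
        _ = κ ^ 2 * ∑ d ∈ Icc 1 (M - 1),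
              ‖∑ n ∈ Icc (R + 1) (N - d), c (n + d) * (starRingEnd ℂ) (c n)‖ :=
            (Finset.mul_sum _ _ _).symm
        _ ≤ κ ^ 2 * ∑ d ∈ Icc 1 M,
              ‖∑ n ∈ Icc (R + 1) (N - d), c (n + d) * (starRingEnd ℂ) (c n)‖ := by
            apply mul_le_mul_of_nonneg_left _ (sq_nonneg κ)
            apply Finset.sum_le_sum_of_subset_of_nonneg
            · exact Finset.Icc_subset_Icc_right (by omega)
            · intro i _ _; exact norm_nonneg _
    have hcN : ((N + M : ℕ) : ℝ) / (M : ℝ) ≤ 4 * (N : ℝ) ^ (1 - b) := by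
      have h1 : ((N + M : ℕ) : ℝ) ≤ 2 * (N : ℝ) := by push_cast; linarith [hMx]
      have h2 : (0 : ℝ) < (N : ℝ) ^ b := Real.rpow_pos_of_pos hx0 b
      have h3 : ((N + M : ℕ) : ℝ) / (M : ℝ) ≤ (2 * (N : ℝ)) / ((N : ℝ) ^ b / 2) :=
        div_le_div₀ (by positivity) h1 (by linarith) hMlow
      refine h3.trans (le_of_eq ?_)
      rw [Real.rpow_sub hx0, Real.rpow_one]
      field_simp
      ring
    -- main-part bound
    have hSnn : (0 : ℝ) ≤ (∑ n ∈ Ioc R N, ‖U n‖ ^ 2)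
        + 2 * ∑ d ∈ Icc 1 (M - 1), ‖∑ n ∈ Ioc R (N - d), ⟪U (n + d), U n⟫‖ := by
      apply add_nonneg (Finset.sum_nonneg fun n _ => sq_nonneg _)
      exact mul_nonneg (by norm_num) (Finset.sum_nonneg fun d _ => norm_nonneg _)
    have hQsq : ‖∑ n ∈ Ioc R N, U n‖ ^ 2
        ≤ (4 * (N : ℝ) ^ (1 - b)) * (B * C * κ ^ 2 * (N : ℝ) ^ (1 - a)
            + 2 * (κ ^ 2 * H k)) := by
      refine hvdc.trans ?_
      apply mul_le_mul hcN _ hSnn (by positivity)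
      exact add_le_add hS0 (by linarith [hSig])
    -- put the pieces together
    have hP2 : r ^ 2 * ‖∑ n ∈ Ioc 0 R, U n‖ ^ 2
        ≤ (κ * C1) ^ 2 * (N : ℝ) ^ (-(2 * δ * (1 - a))) := by
      have h1 : ‖∑ n ∈ Ioc 0 R, U n‖ ^ 2
          ≤ (C1 * (N : ℝ) ^ ((1 - δ) * (1 - a)) * κ) ^ 2 :=
        pow_le_pow_left₀ (norm_nonneg _) hPle 2
      calc r ^ 2 * ‖∑ n ∈ Ioc 0 R, U n‖ ^ 2
          ≤ r ^ 2 * (C1 * (N : ℝ) ^ ((1 - δ) * (1 - a)) * κ) ^ 2 :=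
            mul_le_mul_of_nonneg_left h1 hr2
        _ = (κ * C1) ^ 2 * ((N : ℝ) ^ (a - 1) * (N : ℝ) ^ (a - 1)
              * ((N : ℝ) ^ ((1 - δ) * (1 - a)) * (N : ℝ) ^ ((1 - δ) * (1 - a)))) := by
            rw [hrdef]; ring
        _ = (κ * C1) ^ 2 * (N : ℝ) ^ (-(2 * δ * (1 - a))) := by
            rw [hxadd, hxadd, hxadd]
            congr 1
            congr 1
            ring
    have hQ2 : r ^ 2 * ‖∑ n ∈ Ioc R N, U n‖ ^ 2
        ≤ 4 * (B * C * κ ^ 2) * (N : ℝ) ^ (a - b)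
          + 8 * κ ^ 2 * ((N : ℝ) ^ (2 * a - 1 - b) * H k) := by
      have e1 : (N : ℝ) ^ (a - 1) * (N : ℝ) ^ (a - 1)
          * ((N : ℝ) ^ (1 - b) * (N : ℝ) ^ (1 - a)) = (N : ℝ) ^ (a - b) := by
        rw [hxadd, hxadd, hxadd]
        congr 1
        ring
      have e2 : (N : ℝ) ^ (a - 1) * (N : ℝ) ^ (a - 1) * (N : ℝ) ^ (1 - b)
          = (N : ℝ) ^ (2 * a - 1 - b) := by
        rw [hxadd, hxadd]
        congr 1
        ring
      calc r ^ 2 * ‖∑ n ∈ Ioc R N, U n‖ ^ 2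
          ≤ r ^ 2 * ((4 * (N : ℝ) ^ (1 - b)) * (B * C * κ ^ 2 * (N : ℝ) ^ (1 - a)
              + 2 * (κ ^ 2 * H k))) := mul_le_mul_of_nonneg_left hQsq hr2
        _ = 4 * (B * C * κ ^ 2) * ((N : ℝ) ^ (a - 1) * (N : ℝ) ^ (a - 1)
              * ((N : ℝ) ^ (1 - b) * (N : ℝ) ^ (1 - a)))
            + 8 * κ ^ 2 * (((N : ℝ) ^ (a - 1) * (N : ℝ) ^ (a - 1) * (N : ℝ) ^ (1 - b))
              * H k) := by
            rw [hrdef]; ring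
        _ = 4 * (B * C * κ ^ 2) * (N : ℝ) ^ (a - b)
            + 8 * κ ^ 2 * ((N : ℝ) ^ (2 * a - 1 - b) * H k) := by rw [e1, e2]
    calc r ^ 2 * ‖∑ n ∈ Icc 1 N, U n‖ ^ 2
        ≤ r ^ 2 * (2 * ‖∑ n ∈ Ioc 0 R, U n‖ ^ 2 + 2 * ‖∑ n ∈ Ioc R N, U n‖ ^ 2) :=
          mul_le_mul_of_nonneg_left hGPQ hr2
      _ = 2 * (r ^ 2 * ‖∑ n ∈ Ioc 0 R, U n‖ ^ 2)
          + 2 * (r ^ 2 * ‖∑ n ∈ Ioc R N, U n‖ ^ 2) := by ring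
      _ ≤ 2 * ((κ * C1) ^ 2 * (N : ℝ) ^ (-(2 * δ * (1 - a))))
          + 2 * (4 * (B * C * κ ^ 2) * (N : ℝ) ^ (a - b)
            + 8 * κ ^ 2 * ((N : ℝ) ^ (2 * a - 1 - b) * H k)) := by
          have := mul_le_mul_of_nonneg_left hP2 (by norm_num : (0:ℝ) ≤ 2)
          have := mul_le_mul_of_nonneg_left hQ2 (by norm_num : (0:ℝ) ≤ 2)
          linarith
      _ = 2 * (κ * C1) ^ 2 * (N : ℝ) ^ (-(2 * δ * (1 - a)))
          + (8 * (B * C * κ ^ 2) * (N : ℝ) ^ (a - b)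
            + 16 * κ ^ 2 * ((N : ℝ) ^ (2 * a - 1 - b) * H k)) := by ring
  -- conclusion
  have hS : Summable (fun k : ℕ =>
      2 * (κ * C1) ^ 2 * (⌊ρ ^ k⌋₊ : ℝ) ^ (-(2 * δ * (1 - a)))
        + (8 * (B * C * κ ^ 2) * (⌊ρ ^ k⌋₊ : ℝ) ^ (a - b)
          + 16 * κ ^ 2 * ((⌊ρ ^ k⌋₊ : ℝ) ^ (2 * a - 1 - b) * H k))) := by
    apply Summable.add
    · exact (hgeo _ (by nlinarith)).mul_left _
    · exact ((hgeo _ (by linarith)).mul_left _).add (hcorr.mul_left _)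
  exact Summable.of_nonneg_of_le
    (fun k => integral_nonneg fun x => by positivity) hAle hS
end
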